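/- (Perturbation bound for the forward smoothing kernel.) For every probability mass function φ on O×B, ‖φK^{θ̂,θ} − φK^{θ,θ}‖_TV ≤ [max_{o⁻,o,b} h(θ;o⁻,s,a,o,b) / min_{o⁻,o,b} h(θ;o⁻,s,a,o,b)] · L‖θ̂ − θ‖₂ / min_{o⁻,o,b} h(θ̂;o⁻,s,a,o,b), where the maxima and minima are over (o⁻,o,b) ∈ O×O×B with s, a fixed. -/

import Mathlib

open Finset

/-- Total variation distance between two real-valued functions on a finite set. -/
noncomputable def tvDist {Y : Type*} [Fintype Y] (p q : Y → ℝ) : ℝ :=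
  (1 / 2) * ∑ y, |p y - q y|

/-- The combined high-level policy `π̄_hi(o'|s,o,b;θ)` of the
options-with-failure framework with failure parameter `ζ`. -/
noncomputable def pibarHiP {S O E : Type*} [Fintype O] [DecidableEq O]
    (pihi : O → S → E → ℝ) (ζ : ℝ) (o' : O) (s : S) (o : O) (b : Bool) (θ : E) : ℝ :=
  if b then pihi o' s θ
  else if o' = o then 1 - ζ + ζ / (Fintype.card O : ℝ)
  else ζ / (Fintype.card O : ℝ)

/-- The one-step factor `h(θ;o⁻,s,a,o,b) = π_b(b|s,o⁻;θ)·π̄_hi(o|s,o⁻,b;θ)·π_lo(a|s,o;θ)`. -/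
noncomputable def hFacP {S A O E : Type*} [Fintype O] [DecidableEq O]
    (pib : Bool → S → O → E → ℝ) (pihi : O → S → E → ℝ) (pilo : A → S → O → E → ℝ)
    (ζ : ℝ) (θ : E) (om : O) (s : S) (a : A) (o : O) (b : Bool) : ℝ :=
  pib b s om θ * pibarHiP pihi ζ o s om b θ * pilo a s o θ

/-- The (possibly perturbed) forward smoothing kernel applied to a probability
mass function `φ` on `O × B`: `h1 om o b` is the numerator one-step factor,
`h2 om o b` the one in the normalizing denominator, `ρ` the backward weights
and `C` the global normalizing constant.  With `h1 = h2` and `C = 1` this is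
`φ ↦ φK^{θ,θ}`; with `h1 = h(θ̂;·)`, `h2 = h(θ;·)` it is `φ ↦ φK^{θ̂,θ}`. -/
noncomputable def fwdSmoothKer {O : Type*} [Fintype O]
    (h1 h2 : O → O → Bool → ℝ) (ρ φ : O × Bool → ℝ) (C : ℝ)
    (p : O × Bool) : ℝ :=
  C * ∑ q : O × Bool,
    (h1 q.1 p.1 p.2 * ρ p / ∑ r : O × Bool, h2 q.1 r.1 r.2 * ρ r) * φ q

lemma tv_core {Y : Type*} [Fintype Y] (f g : Y → ℝ) (C ε : ℝ) (hε : 0 ≤ ε)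
    (hf1 : ∑ y, f y = 1) (hfpos : ∀ y, 0 ≤ f y)
    (hdiff : ∑ y, |g y - f y| ≤ ε)
    (hCpos : 0 < C) (hC : C * ∑ y, g y = 1) :
    tvDist (fun y => C * g y) f ≤ C * ε := by
  have h2 : |C - 1| ≤ C * ε := by
    have e : 1 - C = C * ∑ y, (g y - f y) := by
      rw [Finset.sum_sub_distrib, hf1, mul_sub, hC, mul_one]
    calc |C - 1| = C * |∑ y, (g y - f y)| := by
          rw [abs_sub_comm, e, abs_mul, abs_of_pos hCpos]
      _ ≤ C * ∑ y, |g y - f y| := by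
          exact mul_le_mul_of_nonneg_left (Finset.abs_sum_le_sum_abs _ _) hCpos.le
      _ ≤ C * ε := mul_le_mul_of_nonneg_left hdiff hCpos.le
  have hsum : ∑ y, |C * g y - f y| ≤ 2 * (C * ε) := by
    calc ∑ y, |C * g y - f y|
        ≤ ∑ y, (C * |g y - f y| + |C - 1| * f y) := by
          refine Finset.sum_le_sum fun y _ => ?_
          have e : C * g y - f y = C * (g y - f y) + (C - 1) * f y := by ring
          rw [e]
          calc |C * (g y - f y) + (C - 1) * f y|
              ≤ |C * (g y - f y)| + |(C - 1) * f y| := abs_add_le _ _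
            _ = C * |g y - f y| + |C - 1| * f y := by
                rw [abs_mul, abs_mul, abs_of_pos hCpos, abs_of_nonneg (hfpos y)]
      _ = C * ∑ y, |g y - f y| + |C - 1| * ∑ y, f y := by
          rw [Finset.sum_add_distrib, ← Finset.mul_sum, ← Finset.mul_sum]
      _ = C * ∑ y, |g y - f y| + |C - 1| := by rw [hf1, mul_one]
      _ ≤ C * ε + C * ε := add_le_add (mul_le_mul_of_nonneg_left hdiff hCpos.le) h2
      _ = 2 * (C * ε) := by ring
  unfold tvDist
  linarith

lemma fwd_ker_perturb {O : Type*} [Fintype O] [Nonempty O]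
    (H Hh : O → O → Bool → ℝ) (ρ φ : O × Bool → ℝ)
    (hρpos : ∀ p, 0 < ρ p) (hρsum : ∑ p, ρ p = 1)
    (hφnonneg : ∀ p, 0 ≤ φ p) (hφsum : ∑ p, φ p = 1)
    (m M mh δ : ℝ) (hm : 0 < m) (hmh : 0 < mh) (hδ : 0 ≤ δ)
    (hHlb : ∀ om o b, m ≤ H om o b) (hHub : ∀ om o b, H om o b ≤ M)
    (hHhlb : ∀ om o b, mh ≤ Hh om o b)
    (hLip2 : ∀ om o b, |Hh om o b - H om o b| ≤ δ)
    (C : ℝ) (hCpos : 0 < C)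
    (hC : ∑ p, fwdSmoothKer Hh H ρ φ C p = 1) :
    tvDist (fwdSmoothKer Hh H ρ φ C) (fwdSmoothKer H H ρ φ 1) ≤ M / m * δ / mh := by
  obtain ⟨o₀⟩ := ‹Nonempty O›
  set D : O → ℝ := fun q => ∑ r : O × Bool, H q r.1 r.2 * ρ r with hD
  set f : O × Bool → ℝ := fun p => ∑ q : O × Bool, (H q.1 p.1 p.2 * ρ p / D q.1) * φ q with hf
  set g : O × Bool → ℝ := fun p => ∑ q : O × Bool, (Hh q.1 p.1 p.2 * ρ p / D q.1) * φ q with hg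
  have hMpos : 0 < M := hm.trans_le ((hHlb o₀ o₀ true).trans (hHub o₀ o₀ true))
  have hDlb : ∀ q, m ≤ D q := by
    intro q
    calc m = ∑ r : O × Bool, m * ρ r := by rw [← Finset.mul_sum, hρsum, mul_one]
      _ ≤ ∑ r : O × Bool, H q r.1 r.2 * ρ r :=
          Finset.sum_le_sum fun r _ => mul_le_mul_of_nonneg_right (hHlb q r.1 r.2) (hρpos r).le
      _ = D q := by simp only [hD]
  have hDub : ∀ q, D q ≤ M := by
    intro q
    calc D q = ∑ r : O × Bool, H q r.1 r.2 * ρ r := by simp only [hD]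
      _ ≤ ∑ r : O × Bool, M * ρ r :=
          Finset.sum_le_sum fun r _ => mul_le_mul_of_nonneg_right (hHub q r.1 r.2) (hρpos r).le
      _ = M := by rw [← Finset.mul_sum, hρsum, mul_one]
  have hDpos : ∀ q, 0 < D q := fun q => hm.trans_le (hDlb q)
  -- f sums to 1, is nonneg
  have hfsum : ∑ p, f p = 1 := by
    calc ∑ p, f p = ∑ q : O × Bool, ∑ p : O × Bool, (H q.1 p.1 p.2 * ρ p / D q.1) * φ q := by
          simp only [hf]; exact Finset.sum_comm
      _ = ∑ q : O × Bool, φ q := by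
          refine Finset.sum_congr rfl fun q _ => ?_
          rw [← Finset.sum_mul, ← Finset.sum_div]
          have : (∑ p : O × Bool, H q.1 p.1 p.2 * ρ p) = D q.1 := by simp only [hD]
          rw [this, div_self (hDpos q.1).ne', one_mul]
      _ = 1 := hφsum
  have hfnonneg : ∀ p, 0 ≤ f p := by
    intro p
    simp only [hf]
    refine Finset.sum_nonneg fun q _ => mul_nonneg (div_nonneg (mul_nonneg ?_ (hρpos p).le)
      (hDpos q.1).le) (hφnonneg q)
    exact (hm.trans_le (hHlb q.1 p.1 p.2)).le
  -- difference bound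
  have key : ∀ p, |g p - f p| ≤ δ / m * ρ p := by
    intro p
    have e : g p - f p =
        ∑ q : O × Bool, ((Hh q.1 p.1 p.2 - H q.1 p.1 p.2) * (ρ p / D q.1) * φ q) := by
      simp only [hg, hf, ← Finset.sum_sub_distrib]
      exact Finset.sum_congr rfl fun q _ => by ring
    rw [e]
    calc |∑ q : O × Bool, ((Hh q.1 p.1 p.2 - H q.1 p.1 p.2) * (ρ p / D q.1) * φ q)|
        ≤ ∑ q : O × Bool, |(Hh q.1 p.1 p.2 - H q.1 p.1 p.2) * (ρ p / D q.1) * φ q| :=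
          Finset.abs_sum_le_sum_abs _ _
      _ ≤ ∑ q : O × Bool, (δ * (ρ p / m) * φ q) := by
          refine Finset.sum_le_sum fun q _ => ?_
          rw [abs_mul, abs_mul, abs_of_nonneg (div_nonneg (hρpos p).le (hDpos q.1).le),
            abs_of_nonneg (hφnonneg q)]
          have h1 : ρ p / D q.1 ≤ ρ p / m :=
            div_le_div_of_nonneg_left (hρpos p).le hm (hDlb q.1)
          have h2 : |Hh q.1 p.1 p.2 - H q.1 p.1 p.2| ≤ δ := hLip2 q.1 p.1 p.2
          have h3 : (0:ℝ) ≤ ρ p / D q.1 := div_nonneg (hρpos p).le (hDpos q.1).le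
          exact mul_le_mul_of_nonneg_right (mul_le_mul h2 h1 h3 hδ) (hφnonneg q)
      _ = δ / m * ρ p := by rw [← Finset.mul_sum, hφsum, mul_one]; ring
  have hdiff : ∑ p, |g p - f p| ≤ δ / m := by
    calc ∑ p, |g p - f p| ≤ ∑ p, δ / m * ρ p := Finset.sum_le_sum fun p _ => key p
      _ = δ / m := by rw [← Finset.mul_sum, hρsum, mul_one]
  -- lower bound on sum of g
  have hglb : mh / M ≤ ∑ p, g p := by
    calc mh / M = ∑ q : O × Bool, mh / M * φ q := by rw [← Finset.mul_sum, hφsum, mul_one]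
      _ ≤ ∑ q : O × Bool, ((∑ p : O × Bool, Hh q.1 p.1 p.2 * ρ p) / D q.1) * φ q := by
          refine Finset.sum_le_sum fun q _ => mul_le_mul_of_nonneg_right ?_ (hφnonneg q)
          have hN : mh ≤ ∑ p : O × Bool, Hh q.1 p.1 p.2 * ρ p := by
            calc mh = ∑ p : O × Bool, mh * ρ p := by rw [← Finset.mul_sum, hρsum, mul_one]
              _ ≤ _ := Finset.sum_le_sum fun p _ =>
                  mul_le_mul_of_nonneg_right (hHhlb q.1 p.1 p.2) (hρpos p).le
          exact div_le_div₀ (hmh.le.trans hN) hN (hDpos q.1) (hDub q.1)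
      _ = ∑ q : O × Bool, ∑ p : O × Bool, (Hh q.1 p.1 p.2 * ρ p / D q.1) * φ q := by
          refine Finset.sum_congr rfl fun q _ => ?_
          rw [← Finset.sum_mul, ← Finset.sum_div]
      _ = ∑ p, g p := by simp only [hg]; exact Finset.sum_comm
  have hGpos : 0 < ∑ p, g p := (div_pos hmh hMpos).trans_le hglb
  have hKC : fwdSmoothKer Hh H ρ φ C = fun p => C * g p := by
    funext p; simp only [fwdSmoothKer, hg, hD]
  have hK1 : fwdSmoothKer H H ρ φ 1 = f := by
    funext p; simp only [fwdSmoothKer, hf, hD, one_mul]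
  have hCmulG : C * ∑ p, g p = 1 := by
    rw [Finset.mul_sum, ← hC, hKC]
  have hCle : C ≤ M / mh := by
    have hCeq : C = 1 / (∑ p, g p) := by
      rw [eq_div_iff hGpos.ne']; exact hCmulG
    rw [hCeq, div_le_div_iff₀ hGpos hmh, one_mul]
    have := (div_le_iff₀' hMpos).mp hglb
    linarith
  rw [hKC, hK1]
  calc tvDist (fun p => C * g p) f ≤ C * (δ / m) :=
        tv_core f g C (δ / m) (div_nonneg hδ hm.le) hfsum hfnonneg hdiff hCpos hCmulG
    _ ≤ (M / mh) * (δ / m) := mul_le_mul_of_nonneg_right hCle (div_nonneg hδ hm.le)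
    _ = M / m * δ / mh := by ring

/-- **Perturbation bound for the forward smoothing kernel.** -/
theorem forward_smoothing_kernel_perturbation {d : ℕ} {S A O : Type*}
    [Fintype S] [Fintype A] [Fintype O]
    [Nonempty S] [Nonempty A] [Nonempty O] [DecidableEq O]
    (θ θhat : EuclideanSpace ℝ (Fin d))
    (pib : Bool → S → O → EuclideanSpace ℝ (Fin d) → ℝ)
    (pihi : O → S → EuclideanSpace ℝ (Fin d) → ℝ)
    (pilo : A → S → O → EuclideanSpace ℝ (Fin d) → ℝ)
    (hpib_pos : ∀ ϑ ∈ ({θ, θhat} : Set (EuclideanSpace ℝ (Fin d))),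
      ∀ (b : Bool) (s : S) (o : O), 0 < pib b s o ϑ)
    (hpib_sum : ∀ ϑ ∈ ({θ, θhat} : Set (EuclideanSpace ℝ (Fin d))),
      ∀ (s : S) (o : O), ∑ b, pib b s o ϑ = 1)
    (hpihi_pos : ∀ ϑ ∈ ({θ, θhat} : Set (EuclideanSpace ℝ (Fin d))),
      ∀ (o : O) (s : S), 0 < pihi o s ϑ)
    (hpihi_sum : ∀ ϑ ∈ ({θ, θhat} : Set (EuclideanSpace ℝ (Fin d))),
      ∀ s : S, ∑ o, pihi o s ϑ = 1)
    (hpilo_pos : ∀ ϑ ∈ ({θ, θhat} : Set (EuclideanSpace ℝ (Fin d))),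
      ∀ (a : A) (s : S) (o : O), 0 < pilo a s o ϑ)
    (hpilo_sum : ∀ ϑ ∈ ({θ, θhat} : Set (EuclideanSpace ℝ (Fin d))),
      ∀ (s : S) (o : O), ∑ a, pilo a s o ϑ = 1)
    (ζ : ℝ) (hζ : ζ ∈ Set.Ioo (0 : ℝ) 1)
    (s : S) (a : A)
    (ρ : O × Bool → ℝ) (hρpos : ∀ p, 0 < ρ p) (hρsum : ∑ p, ρ p = 1)
    (L : ℝ) (hL : 0 ≤ L)
    (hLip : ∀ (om o : O) (b : Bool),
      |hFacP pib pihi pilo ζ θhat om s a o b - hFacP pib pihi pilo ζ θ om s a o b|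
        ≤ L * ‖θhat - θ‖)
    (φ : O × Bool → ℝ) (hφnonneg : ∀ p, 0 ≤ φ p) (hφsum : ∑ p, φ p = 1)
    (C : ℝ) (hCpos : 0 < C)
    (hC : ∑ p : O × Bool,
      fwdSmoothKer (fun om o b => hFacP pib pihi pilo ζ θhat om s a o b)
        (fun om o b => hFacP pib pihi pilo ζ θ om s a o b) ρ φ C p = 1) :
    tvDist
      (fwdSmoothKer (fun om o b => hFacP pib pihi pilo ζ θhat om s a o b)
        (fun om o b => hFacP pib pihi pilo ζ θ om s a o b) ρ φ C)
      (fwdSmoothKer (fun om o b => hFacP pib pihi pilo ζ θ om s a o b)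
        (fun om o b => hFacP pib pihi pilo ζ θ om s a o b) ρ φ 1)
    ≤ (univ.sup' univ_nonempty
          (fun z : O × O × Bool => hFacP pib pihi pilo ζ θ z.1 s a z.2.1 z.2.2) /
        univ.inf' univ_nonempty
          (fun z : O × O × Bool => hFacP pib pihi pilo ζ θ z.1 s a z.2.1 z.2.2)) *
      (L * ‖θhat - θ‖) /
        univ.inf' univ_nonempty
          (fun z : O × O × Bool => hFacP pib pihi pilo ζ θhat z.1 s a z.2.1 z.2.2) := by
  
  have hθmem : θ ∈ ({θ, θhat} : Set (EuclideanSpace ℝ (Fin d))) := by simp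
  have hθhmem : θhat ∈ ({θ, θhat} : Set (EuclideanSpace ℝ (Fin d))) := by simp
  obtain ⟨hζ0, hζ1⟩ := hζ
  have hcard : (0:ℝ) < (Fintype.card O : ℝ) := by exact_mod_cast Fintype.card_pos
  have hpos : ∀ ϑ ∈ ({θ, θhat} : Set (EuclideanSpace ℝ (Fin d))), ∀ (om o : O) (b : Bool),
      0 < hFacP pib pihi pilo ζ ϑ om s a o b := by
    intro ϑ hϑ om o b
    have hbar : 0 < pibarHiP pihi ζ o s om b ϑ := by
      unfold pibarHiP
      cases b with
      | true => simpa using hpihi_pos ϑ hϑ o s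
      | false =>
        simp only [Bool.false_eq_true, if_false]
        split_ifs
        · have := div_pos hζ0 hcard; linarith
        · exact div_pos hζ0 hcard
    exact mul_pos (mul_pos (hpib_pos ϑ hϑ b s om) hbar) (hpilo_pos ϑ hϑ a s o)
  refine fwd_ker_perturb _ _ ρ φ hρpos hρsum hφnonneg hφsum _ _ _ _ ?_ ?_
    (mul_nonneg hL (norm_nonneg _)) ?_ ?_ ?_ ?_ C hCpos hC
  · exact (Finset.lt_inf'_iff _).mpr fun z _ => hpos θ hθmem z.1 z.2.1 z.2.2
  · exact (Finset.lt_inf'_iff _).mpr fun z _ => hpos θhat hθhmem z.1 z.2.1 z.2.2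
  · exact fun om o b => Finset.inf'_le _ (Finset.mem_univ (om, o, b))
  · exact fun om o b => Finset.le_sup' (fun z : O × O × Bool => hFacP pib pihi pilo ζ θ z.1 s a z.2.1 z.2.2) (Finset.mem_univ (om, o, b))
  · exact fun om o b => Finset.inf'_le _ (Finset.mem_univ (om, o, b))
  · exact hLip
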